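/- One-step descent lemma for mini-batch SAM: under the assumptions that each f_i is β-smooth, f is λ-smooth and α-PL, and interpolation holds, the mini-batch SAM update x_{t+1} = x_t − η g_t^B(x_t + ρ g_t^B(x_t)), with g_t^B the average gradient over a batch of B i.i.d. uniform indices, satisfies E[f(x_{t+1}) | x_t] ≤ (1 − ηα(1 − (κ_B + 1/2)βρ) + η²αλ(βρ+1)²κ_B)·f(x_t), where κ_B = (1/B)((B−1)/2 + β/α). -/

import Mathlib

open scoped BigOperators

local notation "⟪" x ", " y "⟫" => @inner ℝ _ _ x y

lemma sum_pi_eval {ι : Type*} [Fintype ι] [DecidableEq ι] {n : ℕ} (j : ι) (G : Fin n → ℝ) :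
    ∑ c : ι → Fin n, G (c j) = (n : ℝ) ^ (Fintype.card ι - 1) * ∑ i, G i := by
  have h := Fintype.sum_equiv (Equiv.funSplitAt j (Fin n))
      (fun c => G (c j)) (fun p => G p.1) (fun c => rfl)
  rw [h, Fintype.sum_prod_type]
  simp only [Finset.sum_const, Finset.card_univ, nsmul_eq_mul]
  rw [← Finset.mul_sum]
  rw [Fintype.card_fun, Fintype.card_fin]
  have : Fintype.card { k : ι // k ≠ j } = Fintype.card ι - 1 := by
    simp [Fintype.card_subtype_compl]
  rw [this]
  push_cast
  ring

lemma sum_pi_eval_pair {ι : Type*} [Fintype ι] [DecidableEq ι] {n : ℕ} {j j' : ι}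
    (hjj' : j' ≠ j) (F : Fin n → Fin n → ℝ) :
    ∑ c : ι → Fin n, F (c j) (c j') = (n : ℝ) ^ (Fintype.card ι - 2) * ∑ i, ∑ i', F i i' := by
  have h := Fintype.sum_equiv (Equiv.funSplitAt j (Fin n))
      (fun c => F (c j) (c j')) (fun p => F p.1 (p.2 ⟨j', hjj'⟩)) (fun c => rfl)
  rw [h, Fintype.sum_prod_type]
  have hcard : Fintype.card { k : ι // k ≠ j } = Fintype.card ι - 1 := by
    simp [Fintype.card_subtype_compl]
  have h2 : ∀ a : Fin n, ∑ c : { k : ι // k ≠ j } → Fin n, F a (c ⟨j', hjj'⟩)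
      = (n : ℝ) ^ (Fintype.card ι - 2) * ∑ i', F a i' := by
    intro a
    rw [sum_pi_eval (ι := { k : ι // k ≠ j }) ⟨j', hjj'⟩ (fun i' => F a i'), hcard]
    have hee : Fintype.card ι - 1 - 1 = Fintype.card ι - 2 := by omega
    rw [hee]
  rw [Finset.sum_congr rfl (fun a _ => h2 a), ← Finset.mul_sum]

lemma inner_gradient_eq {E : Type*} [NormedAddCommGroup E] [InnerProductSpace ℝ E]
    [CompleteSpace E] (f : E → ℝ) (p v : E) :
    ⟪gradient f p, v⟫ = fderiv ℝ f p v :=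
  InnerProductSpace.toDual_symm_apply

lemma descent_lemma {E : Type*} [NormedAddCommGroup E] [InnerProductSpace ℝ E]
    [CompleteSpace E] (f : E → ℝ) (hf : Differentiable ℝ f) (L : ℝ)
    (hlip : ∀ x y, ‖gradient f x - gradient f y‖ ≤ L * ‖x - y‖) (x y : E) :
    f y ≤ f x + ⟪gradient f x, y - x⟫ + L / 2 * ‖y - x‖ ^ 2 := by
  set v := y - x with hv
  have hgradcont : Continuous (fun p => gradient f p) := by
    have : LipschitzWith (Real.toNNReal L) (fun p => gradient f p) := by
      apply LipschitzWith.of_dist_le_mul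
      intro a b
      rw [dist_eq_norm, dist_eq_norm]
      calc ‖gradient f a - gradient f b‖ ≤ L * ‖a - b‖ := hlip a b
        _ ≤ Real.toNNReal L * ‖a - b‖ := by
            gcongr
            exact (Real.le_coe_toNNReal L)
    exact this.continuous
  set c : ℝ → E := fun t => x + t • v with hc
  have hccont : Continuous c := by continuity
  have hderiv : ∀ t : ℝ, HasDerivAt (fun t => f (c t)) ⟪gradient f (c t), v⟫ t := by
    intro t
    have h1 : HasDerivAt c v t := by
      have h := ((hasDerivAt_id t).smul_const v).const_add x
      rw [one_smul] at h
      exact h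
    have h2 := (hf (c t)).hasFDerivAt.comp_hasDerivAt t h1
    rwa [inner_gradient_eq]
  have hcont : Continuous (fun t : ℝ => ⟪gradient f (c t), v⟫) := by
    exact (hgradcont.comp hccont).inner continuous_const
  have hint : ∀ a b : ℝ, IntervalIntegrable (fun t : ℝ => ⟪gradient f (c t), v⟫)
      MeasureTheory.volume a b := fun a b => hcont.intervalIntegrable a b
  have hFTC : f y - f x = ∫ t in (0:ℝ)..1, ⟪gradient f (c t), v⟫ := by
    have := intervalIntegral.integral_eq_sub_of_hasDerivAt
      (f := fun t => f (c t)) (fun t _ => hderiv t) (hint 0 1)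
    rw [this]
    simp [hc, hv]
  have hbound : ∀ t ∈ Set.Icc (0:ℝ) 1,
      ⟪gradient f (c t), v⟫ ≤ ⟪gradient f x, v⟫ + L * ‖v‖ ^ 2 * t := by
    intro t ht
    have h1 : ⟪gradient f (c t) - gradient f x, v⟫ ≤ L * ‖v‖ ^ 2 * t := by
      calc ⟪gradient f (c t) - gradient f x, v⟫ ≤ ‖gradient f (c t) - gradient f x‖ * ‖v‖ :=
            real_inner_le_norm _ _
        _ ≤ (L * ‖c t - x‖) * ‖v‖ := by
            gcongr
            exact hlip (c t) x
        _ = L * ‖v‖ ^ 2 * t := by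
            rw [hc]
            simp only [add_sub_cancel_left, norm_smul, Real.norm_eq_abs, abs_of_nonneg ht.1]
            ring
    have := inner_sub_left (𝕜 := ℝ) (gradient f (c t)) (gradient f x) v
    linarith [this ▸ h1]
  have hineq : (∫ t in (0:ℝ)..1, ⟪gradient f (c t), v⟫)
      ≤ ∫ t in (0:ℝ)..1, (⟪gradient f x, v⟫ + L * ‖v‖ ^ 2 * t) := by
    apply intervalIntegral.integral_mono_on (by norm_num) (hint 0 1)
    · exact (Continuous.intervalIntegrable (by continuity) 0 1)
    · exact hbound
  have hval : (∫ t in (0:ℝ)..1, (⟪gradient f x, v⟫ + L * ‖v‖ ^ 2 * t))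
      = ⟪gradient f x, v⟫ + L / 2 * ‖v‖ ^ 2 := by
    rw [intervalIntegral.integral_add
      (Continuous.intervalIntegrable continuous_const 0 1)
      (Continuous.intervalIntegrable (by continuity : Continuous (fun t : ℝ => L * ‖v‖ ^ 2 * t)) 0 1)]
    have : (∫ t in (0:ℝ)..1, L * ‖v‖ ^ 2 * t) = L * ‖v‖ ^ 2 * (((1:ℝ) ^ 2 - 0 ^ 2) / 2) := by
      rw [intervalIntegral.integral_const_mul, integral_id]
    rw [this]
    simp
    ring
  linarith [hFTC ▸ hineq, hval ▸ hineq]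

lemma self_bound {E : Type*} [NormedAddCommGroup E] [InnerProductSpace ℝ E]
    [CompleteSpace E] (f : E → ℝ) (hf : Differentiable ℝ f) (β : ℝ) (hβ : 0 < β)
    (hlip : ∀ x y, ‖gradient f x - gradient f y‖ ≤ β * ‖x - y‖)
    (hnn : ∀ x, 0 ≤ f x) (x : E) :
    ‖gradient f x‖ ^ 2 ≤ 2 * β * f x := by
  set g := gradient f x with hg
  have h := descent_lemma f hf β hlip x (x - β⁻¹ • g)
  have h1 : (x - β⁻¹ • g) - x = -(β⁻¹ • g) := by abel
  rw [h1] at h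
  have h2 : ⟪g, -(β⁻¹ • g)⟫ = -(β⁻¹ * ‖g‖ ^ 2) := by
    rw [inner_neg_right, real_inner_smul_right, real_inner_self_eq_norm_sq]
  have h3 : ‖-(β⁻¹ • g)‖ ^ 2 = β⁻¹ ^ 2 * ‖g‖ ^ 2 := by
    rw [norm_neg, norm_smul, mul_pow, Real.norm_eq_abs, sq_abs]
  rw [h2, h3] at h
  have h4 := hnn (x - β⁻¹ • g)
  have h5 : β * β⁻¹ = 1 := mul_inv_cancel₀ hβ.ne'
  have h6 : β / 2 * (β⁻¹ ^ 2 * ‖g‖ ^ 2) = β⁻¹ * ‖g‖ ^ 2 / 2 := by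
    field_simp
  have h7 : β⁻¹ * ‖g‖ ^ 2 ≤ 2 * f x := by linarith
  calc ‖g‖ ^ 2 = β * (β⁻¹ * ‖g‖ ^ 2) := by rw [← mul_assoc, h5, one_mul]
    _ ≤ β * (2 * f x) := mul_le_mul_of_nonneg_left h7 hβ.le
    _ = 2 * β * f x := by ring

lemma gradient_avg {E : Type*} [NormedAddCommGroup E] [InnerProductSpace ℝ E]
    [CompleteSpace E] {n : ℕ} (fi : Fin n → E → ℝ) (f : E → ℝ)
    (hfdef : ∀ x, f x = (n : ℝ)⁻¹ * ∑ i, fi i x)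
    (hdiff : ∀ i, Differentiable ℝ (fi i)) (x : E) :
    gradient f x = (n : ℝ)⁻¹ • ∑ i, gradient (fi i) x := by
  have hfe : f = fun y => (n : ℝ)⁻¹ * ∑ i, fi i y := funext hfdef
  have hsum : DifferentiableAt ℝ (fun y => ∑ i, fi i y) x := by
    apply DifferentiableAt.fun_sum
    intro i _
    exact (hdiff i).differentiableAt
  have hfd : fderiv ℝ f x = (n : ℝ)⁻¹ • ∑ i, fderiv ℝ (fi i) x := by
    rw [hfe, fderiv_const_mul hsum, fderiv_fun_sum (fun i _ => (hdiff i).differentiableAt)]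
  unfold gradient
  rw [hfd, map_smul, map_sum]

set_option maxHeartbeats 2000000 in
/-- One-step descent lemma for mini-batch SAM. -/
theorem minibatch_sam_descent
    {n B d : ℕ} (hn : 0 < n) (hB : 0 < B)
    (β lam α η ρ : ℝ)
    (hβ : 0 < β) (hlam : 0 < lam) (hα : 0 < α) (hη : 0 ≤ η) (hρ : 0 ≤ ρ)
    (fi : Fin n → EuclideanSpace ℝ (Fin d) → ℝ)
    (f : EuclideanSpace ℝ (Fin d) → ℝ)
    (hfdef : ∀ x, f x = (n : ℝ)⁻¹ * ∑ i, fi i x)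
    (hdiff : ∀ i, Differentiable ℝ (fi i)) (hfdiff : Differentiable ℝ f)
    (hnonneg : ∀ i x, 0 ≤ fi i x)
    (hβsmooth : ∀ i x y, ‖gradient (fi i) x - gradient (fi i) y‖ ≤ β * ‖x - y‖)
    (hlamsmooth : ∀ x y, ‖gradient f x - gradient f y‖ ≤ lam * ‖x - y‖)
    (xstar : EuclideanSpace ℝ (Fin d))
    (hPL : ∀ x, α * f x ≤ ‖gradient f x‖ ^ 2)
    (hinterp : ∀ i, fi i xstar = 0 ∧ gradient (fi i) xstar = 0)
    (hτ : 0 ≤ (1 - β * ρ / 2)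
        - ((B : ℝ) - 1) / (2 * B) * (η * lam * (β * ρ + 1) ^ 2 + β * ρ))
    (x : EuclideanSpace ℝ (Fin d)) :
    ((n : ℝ) ^ B)⁻¹ *
        ∑ b : Fin B → Fin n,
          f (x - η • ((B : ℝ)⁻¹ • ∑ j, gradient (fi (b j))
                (x + ρ • ((B : ℝ)⁻¹ • ∑ j', gradient (fi (b j')) x))))
      ≤ (1 - η * α * (1 - ((B : ℝ)⁻¹ * (((B : ℝ) - 1) / 2 + β / α) + 1 / 2) * β * ρ)
            + η ^ 2 * α * lam * (β * ρ + 1) ^ 2 *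
                ((B : ℝ)⁻¹ * (((B : ℝ) - 1) / 2 + β / α))) * f x := by
  classical
  have hn' : (n : ℝ) ≠ 0 := Nat.cast_ne_zero.mpr hn.ne'
  have hB' : (B : ℝ) ≠ 0 := Nat.cast_ne_zero.mpr hB.ne'
  have hnB : ((n : ℝ) ^ B) ≠ 0 := pow_ne_zero _ hn'
  set v : Fin n → EuclideanSpace ℝ (Fin d) := fun i => gradient (fi i) x with hv
  set w : EuclideanSpace ℝ (Fin d) := gradient f x with hwdef
  have hw : w = (n : ℝ)⁻¹ • ∑ i, v i := gradient_avg fi f hfdef hdiff x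
  have hsumv : ∑ i, v i = (n : ℝ) • w := by
    rw [hw, smul_smul, mul_inv_cancel₀ hn', one_smul]
  set G : (Fin B → Fin n) → EuclideanSpace ℝ (Fin d) :=
    fun b => (B : ℝ)⁻¹ • ∑ j, v (b j) with hG
  set H : (Fin B → Fin n) → EuclideanSpace ℝ (Fin d) :=
    fun b => (B : ℝ)⁻¹ • ∑ j, gradient (fi (b j)) (x + ρ • G b) with hH
  set C : ℝ := η * β * ρ / 2 + η ^ 2 * lam * (β * ρ + 1) ^ 2 / 2 with hC
  have hC0 : 0 ≤ C := by rw [hC]; positivity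
  -- pointwise bound
  have key : ∀ b : Fin B → Fin n, f (x - η • H b)
      ≤ f x - η * ⟪w, G b⟫ + (η * β * ρ / 2) * ‖w‖ ^ 2 + C * ‖G b‖ ^ 2 := by
    intro b
    have hHGdiff : H b - G b
        = (B : ℝ)⁻¹ • ∑ j, (gradient (fi (b j)) (x + ρ • G b) - v (b j)) := by
      simp only [hH, hG]
      rw [Finset.sum_sub_distrib, smul_sub]
    have hHG : ‖H b - G b‖ ≤ β * ρ * ‖G b‖ := by
      rw [hHGdiff, norm_smul]
      have h1 : ∀ j : Fin B, ‖gradient (fi (b j)) (x + ρ • G b) - v (b j)‖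
          ≤ β * (ρ * ‖G b‖) := by
        intro j
        have h := hβsmooth (b j) (x + ρ • G b) x
        rw [add_sub_cancel_left, norm_smul, Real.norm_eq_abs, abs_of_nonneg hρ,
          ← mul_assoc] at h
        calc ‖gradient (fi (b j)) (x + ρ • G b) - v (b j)‖
            ≤ β * ρ * ‖G b‖ := h
          _ = β * (ρ * ‖G b‖) := by ring
      calc ‖(B : ℝ)⁻¹‖ * ‖∑ j, (gradient (fi (b j)) (x + ρ • G b) - v (b j))‖
          ≤ (B : ℝ)⁻¹ * ∑ j, ‖gradient (fi (b j)) (x + ρ • G b) - v (b j)‖ := by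
            rw [Real.norm_eq_abs, abs_of_nonneg (by positivity)]
            exact mul_le_mul_of_nonneg_left (norm_sum_le _ _) (by positivity)
        _ ≤ (B : ℝ)⁻¹ * ∑ _j : Fin B, (β * (ρ * ‖G b‖)) := by
            gcongr with j
            exact h1 j
        _ = β * ρ * ‖G b‖ := by
            rw [Finset.sum_const, Finset.card_univ, Fintype.card_fin, nsmul_eq_mul]
            field_simp
    have hHn : ‖H b‖ ≤ (β * ρ + 1) * ‖G b‖ := by
      calc ‖H b‖ = ‖(H b - G b) + G b‖ := by rw [sub_add_cancel]
        _ ≤ ‖H b - G b‖ + ‖G b‖ := norm_add_le _ _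
        _ ≤ β * ρ * ‖G b‖ + ‖G b‖ := by linarith
        _ = (β * ρ + 1) * ‖G b‖ := by ring
    have hH2 : ‖H b‖ ^ 2 ≤ (β * ρ + 1) ^ 2 * ‖G b‖ ^ 2 := by
      nlinarith [norm_nonneg (H b), norm_nonneg (G b), hHn,
        mul_nonneg (mul_nonneg hβ.le hρ) (norm_nonneg (G b))]
    have hdesc := descent_lemma f hfdiff lam hlamsmooth x (x - η • H b)
    have e1 : (x - η • H b) - x = -(η • H b) := by abel
    rw [e1] at hdesc
    have e2 : ⟪gradient f x, -(η • H b)⟫ = -(η * ⟪w, H b⟫) := by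
      rw [inner_neg_right, real_inner_smul_right, ← hwdef]
    have e3 : ‖-(η • H b)‖ ^ 2 = η ^ 2 * ‖H b‖ ^ 2 := by
      rw [norm_neg, norm_smul, mul_pow, Real.norm_eq_abs, sq_abs]
    rw [e2, e3] at hdesc
    have hwh : ⟪w, G b⟫ - β * ρ / 2 * (‖w‖ ^ 2 + ‖G b‖ ^ 2) ≤ ⟪w, H b⟫ := by
      have hs : ⟪w, H b⟫ - ⟪w, G b⟫ = ⟪w, H b - G b⟫ := (inner_sub_right _ _ _).symm
      have habs : |⟪w, H b - G b⟫| ≤ ‖w‖ * ‖H b - G b‖ := abs_real_inner_le_norm _ _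
      have h2 : ‖w‖ * ‖H b - G b‖ ≤ ‖w‖ * (β * ρ * ‖G b‖) :=
        mul_le_mul_of_nonneg_left hHG (norm_nonneg w)
      have h3 : ‖w‖ * (β * ρ * ‖G b‖) ≤ β * ρ / 2 * (‖w‖ ^ 2 + ‖G b‖ ^ 2) := by
        nlinarith [sq_nonneg (‖w‖ - ‖G b‖), mul_nonneg hβ.le hρ]
      have hcc : |⟪w, H b - G b⟫| ≤ β * ρ / 2 * (‖w‖ ^ 2 + ‖G b‖ ^ 2) :=
        le_trans habs (le_trans h2 h3)
      linarith [hs, (abs_le.mp hcc).1]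
    have t1 : η * (⟪w, G b⟫ - β * ρ / 2 * (‖w‖ ^ 2 + ‖G b‖ ^ 2)) ≤ η * ⟪w, H b⟫ :=
      mul_le_mul_of_nonneg_left hwh hη
    have t2 : lam / 2 * (η ^ 2 * ‖H b‖ ^ 2)
        ≤ lam / 2 * (η ^ 2 * ((β * ρ + 1) ^ 2 * ‖G b‖ ^ 2)) :=
      mul_le_mul_of_nonneg_left (mul_le_mul_of_nonneg_left hH2 (sq_nonneg η)) (by positivity)
    rw [hC]
    nlinarith [hdesc, t1, t2]
  -- counting
  have hcard : Fintype.card (Fin B → Fin n) = n ^ B := by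
    simp [Fintype.card_fun]
  obtain ⟨m, hm⟩ : ∃ m, B = m + 1 := ⟨B - 1, (Nat.succ_pred_eq_of_pos hB).symm⟩
  have hpow : (n : ℝ) ^ B = (n : ℝ) ^ m * n := by rw [hm, pow_succ]
  have hBm1 : B - 1 = m := by omega
  -- first moment
  have hAsum : ∑ b : Fin B → Fin n, ⟪w, G b⟫ = (n : ℝ) ^ B * ‖w‖ ^ 2 := by
    have h1 : ∀ b : Fin B → Fin n, ⟪w, G b⟫ = (B : ℝ)⁻¹ * ∑ j, ⟪w, v (b j)⟫ := by
      intro b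
      simp only [hG]
      rw [real_inner_smul_right, inner_sum]
    rw [Finset.sum_congr rfl (fun b _ => h1 b), ← Finset.mul_sum, Finset.sum_comm]
    have h2 : ∀ j : Fin B, (∑ b : Fin B → Fin n, ⟪w, v (b j)⟫)
        = (n : ℝ) ^ m * ∑ i, ⟪w, v i⟫ := by
      intro j
      rw [sum_pi_eval j (fun i => ⟪w, v i⟫), Fintype.card_fin, hBm1]
    rw [Finset.sum_congr rfl (fun j _ => h2 j), Finset.sum_const, Finset.card_univ,
      Fintype.card_fin, nsmul_eq_mul]
    have h3 : ∑ i, ⟪w, v i⟫ = (n : ℝ) * ‖w‖ ^ 2 := by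
      rw [← inner_sum, hsumv, real_inner_smul_right, real_inner_self_eq_norm_sq]
    rw [h3, hpow]
    field_simp
  -- second moment
  set Sg : ℝ := ∑ i, ‖v i‖ ^ 2 with hSg
  have hBsum : ∑ b : Fin B → Fin n, ‖G b‖ ^ 2
      = (n : ℝ) ^ B * ((1 - (B : ℝ)⁻¹) * ‖w‖ ^ 2 + (B : ℝ)⁻¹ * ((n : ℝ)⁻¹ * Sg)) := by
    have h1 : ∀ b : Fin B → Fin n, ‖G b‖ ^ 2
        = (B : ℝ)⁻¹ * ((B : ℝ)⁻¹ * ∑ j, ∑ j', ⟪v (b j), v (b j')⟫) := by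
      intro b
      rw [← real_inner_self_eq_norm_sq]
      simp only [hG]
      rw [real_inner_smul_left, real_inner_smul_right, sum_inner]
      simp only [inner_sum]
    have hdiag : ∀ j : Fin B, (∑ b : Fin B → Fin n, ⟪v (b j), v (b j)⟫)
        = (n : ℝ) ^ m * Sg := by
      intro j
      rw [sum_pi_eval j (fun i => ⟪v i, v i⟫), Fintype.card_fin, hBm1, hSg]
      congr 1
      exact Finset.sum_congr rfl fun i _ => real_inner_self_eq_norm_sq _
    have hoff : ∀ j j' : Fin B, j' ≠ j →
        (∑ b : Fin B → Fin n, ⟪v (b j), v (b j')⟫) = (n : ℝ) ^ B * ‖w‖ ^ 2 := by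
      intro j j' hne
      rw [sum_pi_eval_pair hne (fun i i' => ⟪v i, v i'⟫), Fintype.card_fin]
      have hall : ∑ i, ∑ i', ⟪v i, v i'⟫ = (n : ℝ) ^ 2 * ‖w‖ ^ 2 := by
        have : ∑ i, ∑ i', ⟪v i, v i'⟫ = ⟪∑ i, v i, ∑ i', v i'⟫ := by
          rw [sum_inner]
          exact Finset.sum_congr rfl fun i _ => (inner_sum _ _ _).symm
        rw [this, hsumv, real_inner_smul_left, real_inner_smul_right,
          real_inner_self_eq_norm_sq]
        ring
      have hB2 : 2 ≤ B := by
        have h := Fintype.one_lt_card_iff_nontrivial.mpr ⟨⟨j', j, hne⟩⟩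
        rw [Fintype.card_fin] at h
        omega
      obtain ⟨k, hk⟩ : ∃ k, B = k + 2 := ⟨B - 2, by omega⟩
      rw [hall, hk]
      have hkk : k + 2 - 2 = k := by omega
      rw [hkk, pow_add]
      ring
    have hjsum : ∀ j : Fin B, (∑ j' : Fin B, ∑ b : Fin B → Fin n, ⟪v (b j), v (b j')⟫)
        = (n : ℝ) ^ m * Sg + ((B : ℝ) - 1) * ((n : ℝ) ^ B * ‖w‖ ^ 2) := by
      intro j
      rw [← Finset.add_sum_erase _ _ (Finset.mem_univ j)]
      congr 1
      · exact hdiag j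
      · rw [Finset.sum_congr rfl (fun j' hj' => hoff j j' (Finset.ne_of_mem_erase hj')),
          Finset.sum_const, Finset.card_erase_of_mem (Finset.mem_univ j),
          Finset.card_univ, Fintype.card_fin, nsmul_eq_mul, Nat.cast_pred hB]
    calc ∑ b : Fin B → Fin n, ‖G b‖ ^ 2
        = (B : ℝ)⁻¹ * ((B : ℝ)⁻¹ *
            ∑ b : Fin B → Fin n, ∑ j : Fin B, ∑ j' : Fin B, ⟪v (b j), v (b j')⟫) := by
          rw [Finset.sum_congr rfl (fun b _ => h1 b), ← Finset.mul_sum, ← Finset.mul_sum]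
      _ = (B : ℝ)⁻¹ * ((B : ℝ)⁻¹ *
            ∑ j : Fin B, ∑ j' : Fin B, ∑ b : Fin B → Fin n, ⟪v (b j), v (b j')⟫) := by
          rw [Finset.sum_comm]
          congr 2
          exact Finset.sum_congr rfl fun j _ => Finset.sum_comm
      _ = (B : ℝ)⁻¹ * ((B : ℝ)⁻¹ *
            ((B : ℝ) * ((n : ℝ) ^ m * Sg + ((B : ℝ) - 1) * ((n : ℝ) ^ B * ‖w‖ ^ 2)))) := by
          rw [Finset.sum_congr rfl (fun j _ => hjsum j), Finset.sum_const,
            Finset.card_univ, Fintype.card_fin, nsmul_eq_mul]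
      _ = (n : ℝ) ^ B * ((1 - (B : ℝ)⁻¹) * ‖w‖ ^ 2 + (B : ℝ)⁻¹ * ((n : ℝ)⁻¹ * Sg)) := by
          rw [hpow]
          field_simp
          ring
  -- averaging
  have hsum_le : ∑ b : Fin B → Fin n, f (x - η • H b)
      ≤ ∑ b : Fin B → Fin n,
          (f x - η * ⟪w, G b⟫ + (η * β * ρ / 2) * ‖w‖ ^ 2 + C * ‖G b‖ ^ 2) :=
    Finset.sum_le_sum fun b _ => key b
  have hRsum : ∑ b : Fin B → Fin n,
        (f x - η * ⟪w, G b⟫ + (η * β * ρ / 2) * ‖w‖ ^ 2 + C * ‖G b‖ ^ 2)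
      = (n : ℝ) ^ B * (f x - η * ‖w‖ ^ 2 + (η * β * ρ / 2) * ‖w‖ ^ 2
          + C * ((1 - (B : ℝ)⁻¹) * ‖w‖ ^ 2 + (B : ℝ)⁻¹ * ((n : ℝ)⁻¹ * Sg))) := by
    simp only [Finset.sum_add_distrib, Finset.sum_sub_distrib, ← Finset.mul_sum,
      hAsum, hBsum, Finset.sum_const, Finset.card_univ, hcard, nsmul_eq_mul]
    push_cast
    ring
  have hfx0 : 0 ≤ f x := by
    rw [hfdef]
    exact mul_nonneg (by positivity) (Finset.sum_nonneg fun i _ => hnonneg i x)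
  have hSgb : (n : ℝ)⁻¹ * Sg ≤ 2 * β * f x := by
    have h1 : ∀ i : Fin n, ‖v i‖ ^ 2 ≤ 2 * β * fi i x := fun i =>
      self_bound (fi i) (hdiff i) β hβ (hβsmooth i) (fun y => hnonneg i y) x
    calc (n : ℝ)⁻¹ * Sg ≤ (n : ℝ)⁻¹ * ∑ i, 2 * β * fi i x := by
          rw [hSg]
          exact mul_le_mul_of_nonneg_left (Finset.sum_le_sum fun i _ => h1 i) (by positivity)
      _ = 2 * β * f x := by
          rw [hfdef, ← Finset.mul_sum]
          ring
  have hPLx : α * f x ≤ ‖w‖ ^ 2 := hPL x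
  set T : ℝ := η - η * β * ρ / 2 - C * (1 - (B : ℝ)⁻¹) with hT
  have hT0 : 0 ≤ T := by
    have hTe : T = η * ((1 - β * ρ / 2)
        - ((B : ℝ) - 1) / (2 * B) * (η * lam * (β * ρ + 1) ^ 2 + β * ρ)) := by
      rw [hT, hC]
      field_simp
      ring
    rw [hTe]
    exact mul_nonneg hη hτ
  clear_value T C Sg
  calc ((n : ℝ) ^ B)⁻¹ * ∑ b : Fin B → Fin n, f (x - η • H b)
      ≤ ((n : ℝ) ^ B)⁻¹ * ∑ b : Fin B → Fin n,
          (f x - η * ⟪w, G b⟫ + (η * β * ρ / 2) * ‖w‖ ^ 2 + C * ‖G b‖ ^ 2) :=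
        mul_le_mul_of_nonneg_left hsum_le (by positivity)
    _ = f x - η * ‖w‖ ^ 2 + (η * β * ρ / 2) * ‖w‖ ^ 2
          + C * ((1 - (B : ℝ)⁻¹) * ‖w‖ ^ 2 + (B : ℝ)⁻¹ * ((n : ℝ)⁻¹ * Sg)) := by
        rw [hRsum, ← mul_assoc, inv_mul_cancel₀ hnB, one_mul]
    _ = f x - T * ‖w‖ ^ 2 + C * (B : ℝ)⁻¹ * ((n : ℝ)⁻¹ * Sg) := by
        rw [hT]
        ring
    _ ≤ f x - T * (α * f x) + C * (B : ℝ)⁻¹ * (2 * β * f x) := by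
        have u1 := mul_le_mul_of_nonneg_left hPLx hT0
        have u2 := mul_le_mul_of_nonneg_left hSgb
          (mul_nonneg hC0 (by positivity : (0:ℝ) ≤ (B : ℝ)⁻¹))
        linarith
    _ = (1 - η * α * (1 - ((B : ℝ)⁻¹ * (((B : ℝ) - 1) / 2 + β / α) + 1 / 2) * β * ρ)
            + η ^ 2 * α * lam * (β * ρ + 1) ^ 2 *
                ((B : ℝ)⁻¹ * (((B : ℝ) - 1) / 2 + β / α))) * f x := by
        rw [hT, hC]
        field_simp
        ring
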